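/- Let μ be a finite positive measure on ℝ^d satisfying the joint moment bound sup_x ∫ (|x-y|^q ∨ |x-y|^{pq}) η(x,y) dμ(y) ≤ C_η, where η ≥ 0 is a symmetric weight and q = p/(p-1). Let ρ be a probability measure on ℝ^d and j a signed measure on G = {(x,y) : x ≠ y, η(x,y) > 0} such that for some constant A ≥ 0 and all nonnegative measurable Φ on G: ∬_G Φ η d|j| ≤ A^{1/p} (∬_G Φ^q η d(μ⊗μ + ρ⊗μ + μ⊗ρ))^{1/q}. Then ∬_G (|x-y| ∨ |x-y|^p) η(x,y) d|j|(x,y) ≤ A^{1/p} · (C_μ + 2)^{1/q} · C_η^{1/q} · 2^{1/q}, where C_μ bounds ∫(1+|x|^p)dμ. -/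

import Mathlib

open MeasureTheory ENNReal

/-- Under the joint moment bound (MB2) on `(μ, η)` and the individual
moment bound on `μ`, any flux `j` satisfying the Hölder-type bound against the action
constant `A` obeys the moment estimate
`∬_G (|x-y| ∨ |x-y|^p) η d|j| ≤ A^{1/p} (C_μ+2)^{1/q} C_η^{1/q} 2^{1/q}`. -/
lemma my_lintegral_prod_le {α β : Type*} [MeasurableSpace α] [MeasurableSpace β]
    (μ : Measure α) (ν : Measure β) [SFinite ν] (f : α × β → ℝ≥0∞) :
    ∫⁻ z, f z ∂(μ.prod ν) ≤ ∫⁻ x, ∫⁻ y, f (x, y) ∂ν ∂μ := by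
  rw [← iSup_lintegral_measurable_le_eq_lintegral f]
  refine iSup_le fun g => iSup_le fun hg => iSup_le fun hgf => ?_
  rw [lintegral_prod g hg.aemeasurable]
  exact lintegral_mono fun x => lintegral_mono fun y => hgf (x, y)

theorem flux_moment_bound
    {d : ℕ} (p q Cη Cμ A : ℝ) (hp : 1 < p) (hq : q = p / (p - 1)) (hA : 0 ≤ A)
    (η : EuclideanSpace ℝ (Fin d) × EuclideanSpace ℝ (Fin d) → ℝ)
    (hηnn : ∀ z, 0 ≤ η z)
    (hηsymm : ∀ x y : EuclideanSpace ℝ (Fin d), η (x, y) = η (y, x))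
    (G : Set (EuclideanSpace ℝ (Fin d) × EuclideanSpace ℝ (Fin d)))
    (hG : G = {z | z.1 ≠ z.2 ∧ 0 < η z})
    (μ ρ : Measure (EuclideanSpace ℝ (Fin d)))
    [IsFiniteMeasure μ] [IsProbabilityMeasure ρ]
    (hmom : ∀ x, ∫⁻ y, ENNReal.ofReal
        (max (‖x - y‖ ^ q) (‖x - y‖ ^ (p * q)) * η (x, y)) ∂μ ≤ ENNReal.ofReal Cη)
    (hCμ : ∫⁻ x, ENNReal.ofReal (1 + ‖x‖ ^ p) ∂μ ≤ ENNReal.ofReal Cμ)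
    (j : SignedMeasure (EuclideanSpace ℝ (Fin d) × EuclideanSpace ℝ (Fin d)))
    (hHolder : ∀ Φ : EuclideanSpace ℝ (Fin d) × EuclideanSpace ℝ (Fin d) → ℝ≥0∞,
      Measurable Φ →
      ∫⁻ z in G, Φ z * ENNReal.ofReal (η z) ∂j.totalVariation
        ≤ ENNReal.ofReal A ^ (1 / p) *
          (∫⁻ z in G, Φ z ^ q * ENNReal.ofReal (η z)
              ∂(μ.prod μ + ρ.prod μ + μ.prod ρ)) ^ (1 / q)) :
    ∫⁻ z in G, ENNReal.ofReal (max ‖z.1 - z.2‖ (‖z.1 - z.2‖ ^ p) * η z)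
        ∂j.totalVariation
      ≤ ENNReal.ofReal A ^ (1 / p) * ENNReal.ofReal (Cμ + 2) ^ (1 / q)
          * ENNReal.ofReal Cη ^ (1 / q) * (2 : ℝ≥0∞) ^ (1 / q) := by
  have hp0 : (0:ℝ) < p := by linarith
  have hq0 : (0:ℝ) < q := by rw [hq]; exact div_pos (by linarith) (by linarith)
  have hinvq : (0:ℝ) ≤ 1 / q := by positivity
  set Φ : EuclideanSpace ℝ (Fin d) × EuclideanSpace ℝ (Fin d) → ℝ≥0∞ :=
    fun z => ENNReal.ofReal (max ‖z.1 - z.2‖ (‖z.1 - z.2‖ ^ p)) with hΦdef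
  have hΦ : Measurable Φ := by fun_prop
  -- the target LHS equals the Hölder LHS
  have hLHS : ∫⁻ z in G, ENNReal.ofReal (max ‖z.1 - z.2‖ (‖z.1 - z.2‖ ^ p) * η z)
        ∂j.totalVariation = ∫⁻ z in G, Φ z * ENNReal.ofReal (η z) ∂j.totalVariation := by
    refine lintegral_congr fun z => ?_
    rw [hΦdef, ENNReal.ofReal_mul (le_trans (norm_nonneg _) (le_max_left _ _))]
  -- pointwise identification of Φ^q * η with the moment integrand
  set Ψ : EuclideanSpace ℝ (Fin d) × EuclideanSpace ℝ (Fin d) → ℝ≥0∞ :=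
    fun z => ENNReal.ofReal (max (‖z.1 - z.2‖ ^ q) (‖z.1 - z.2‖ ^ (p * q)) * η z) with hΨdef
  have hΦΨ : ∀ z, Φ z ^ q * ENNReal.ofReal (η z) = Ψ z := by
    intro z
    set a : ℝ := ‖z.1 - z.2‖ with ha
    have ha0 : 0 ≤ a := norm_nonneg _
    have h1 : Φ z ^ q = ENNReal.ofReal ((max a (a ^ p)) ^ q) :=
      ENNReal.ofReal_rpow_of_nonneg (le_trans ha0 (le_max_left _ _)) hq0.le
    have h2 : (max a (a ^ p)) ^ q = max (a ^ q) (a ^ (p * q)) := by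
      rw [Real.rpow_mul ha0]
      rcases le_total a (a ^ p) with h | h
      · rw [max_eq_right h, max_eq_right (Real.rpow_le_rpow ha0 h hq0.le)]
      · rw [max_eq_left h, max_eq_left (Real.rpow_le_rpow (Real.rpow_nonneg ha0 p) h hq0.le)]
    rw [h1, h2, ← ENNReal.ofReal_mul (le_trans (Real.rpow_nonneg ha0 q) (le_max_left _ _))]
  -- bound the total mass of μ
  have hμuniv : μ Set.univ ≤ ENNReal.ofReal Cμ := by
    calc μ Set.univ = ∫⁻ _, 1 ∂μ := (lintegral_one).symm
    _ ≤ ∫⁻ x, ENNReal.ofReal (1 + ‖x‖ ^ p) ∂μ := by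
        refine lintegral_mono fun x => ?_
        rw [show (1:ℝ≥0∞) = ENNReal.ofReal 1 from ENNReal.ofReal_one.symm]
        exact ENNReal.ofReal_le_ofReal (le_add_of_nonneg_right (Real.rpow_nonneg (norm_nonneg _) p))
    _ ≤ ENNReal.ofReal Cμ := hCμ
  -- key bound on the triple integral
  have hI : (∫⁻ z in G, Φ z ^ q * ENNReal.ofReal (η z)
        ∂(μ.prod μ + ρ.prod μ + μ.prod ρ))
      ≤ ENNReal.ofReal (Cμ + 2) * ENNReal.ofReal Cη * 2 := by
    rcases lt_or_ge Cμ 0 with hCμ0 | hCμ0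
    · -- degenerate case: μ = 0
      have : μ Set.univ = 0 := le_antisymm (by simpa [ENNReal.ofReal_eq_zero.mpr hCμ0.le] using hμuniv) zero_le
      have hμ0 : μ = 0 := Measure.measure_univ_eq_zero.mp this
      simp [hμ0]
    · -- main case
      have hle : ∀ ν : Measure (EuclideanSpace ℝ (Fin d)),
          ∫⁻ z, Ψ z ∂(ν.prod μ) ≤ ENNReal.ofReal Cη * ν Set.univ := by
        intro ν
        calc ∫⁻ z, Ψ z ∂(ν.prod μ) ≤ ∫⁻ x, ∫⁻ y, Ψ (x, y) ∂μ ∂ν :=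
            my_lintegral_prod_le ν μ Ψ
        _ ≤ ∫⁻ _, ENNReal.ofReal Cη ∂ν := lintegral_mono fun x => hmom x
        _ = ENNReal.ofReal Cη * ν Set.univ := lintegral_const _
      have h3 : ∫⁻ z, Ψ z ∂(μ.prod ρ) ≤ ENNReal.ofReal Cη := by
        have hswap : ∀ z : EuclideanSpace ℝ (Fin d) × EuclideanSpace ℝ (Fin d),
            Ψ (Prod.swap z) = Ψ z := by
          intro ⟨x, y⟩
          simp only [hΨdef, Prod.swap, norm_sub_rev y x, hηsymm y x]
        calc ∫⁻ z, Ψ z ∂(μ.prod ρ)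
            = ∫⁻ z, Ψ z ∂(Measure.map Prod.swap (ρ.prod μ)) := by rw [Measure.prod_swap]
        _ ≤ ∫⁻ z, Ψ (Prod.swap z) ∂(ρ.prod μ) := lintegral_map_le Ψ Prod.swap
        _ = ∫⁻ z, Ψ z ∂(ρ.prod μ) := lintegral_congr hswap
        _ ≤ ENNReal.ofReal Cη * ρ Set.univ := hle ρ
        _ = ENNReal.ofReal Cη := by simp
      calc (∫⁻ z in G, Φ z ^ q * ENNReal.ofReal (η z) ∂(μ.prod μ + ρ.prod μ + μ.prod ρ))
          = ∫⁻ z in G, Ψ z ∂(μ.prod μ + ρ.prod μ + μ.prod ρ) := lintegral_congr fun z => hΦΨ z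
      _ ≤ ∫⁻ z, Ψ z ∂(μ.prod μ + ρ.prod μ + μ.prod ρ) := setLIntegral_le_lintegral _ _
      _ = ∫⁻ z, Ψ z ∂(μ.prod μ) + ∫⁻ z, Ψ z ∂(ρ.prod μ) + ∫⁻ z, Ψ z ∂(μ.prod ρ) := by
          rw [lintegral_add_measure, lintegral_add_measure]
      _ ≤ ENNReal.ofReal Cη * μ Set.univ + ENNReal.ofReal Cη
            + ENNReal.ofReal Cη :=
          add_le_add (add_le_add (hle μ) ((hle ρ).trans_eq (by simp))) h3
      _ ≤ ENNReal.ofReal Cη * ENNReal.ofReal Cμ + ENNReal.ofReal Cη + ENNReal.ofReal Cη :=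
          add_le_add_left (add_le_add_left (mul_le_mul_right hμuniv _) _) _
      _ = ENNReal.ofReal Cη * (ENNReal.ofReal Cμ + 2) := by ring
      _ = ENNReal.ofReal Cη * ENNReal.ofReal (Cμ + 2) := by
          rw [ENNReal.ofReal_add hCμ0 (by norm_num), ENNReal.ofReal_ofNat]
      _ ≤ ENNReal.ofReal (Cμ + 2) * ENNReal.ofReal Cη * 2 := by
          rw [mul_comm]
          exact le_mul_of_one_le_right zero_le one_le_two
  -- put everything together
  calc ∫⁻ z in G, ENNReal.ofReal (max ‖z.1 - z.2‖ (‖z.1 - z.2‖ ^ p) * η z) ∂j.totalVariation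
      = ∫⁻ z in G, Φ z * ENNReal.ofReal (η z) ∂j.totalVariation := hLHS
  _ ≤ ENNReal.ofReal A ^ (1 / p) *
        (∫⁻ z in G, Φ z ^ q * ENNReal.ofReal (η z)
            ∂(μ.prod μ + ρ.prod μ + μ.prod ρ)) ^ (1 / q) := hHolder Φ hΦ
  _ ≤ ENNReal.ofReal A ^ (1 / p) *
        (ENNReal.ofReal (Cμ + 2) * ENNReal.ofReal Cη * 2) ^ (1 / q) := by
      exact mul_le_mul_right (ENNReal.rpow_le_rpow hI hinvq) _
  _ = ENNReal.ofReal A ^ (1 / p) * ENNReal.ofReal (Cμ + 2) ^ (1 / q)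
        * ENNReal.ofReal Cη ^ (1 / q) * (2 : ℝ≥0∞) ^ (1 / q) := by
      rw [ENNReal.mul_rpow_of_nonneg _ _ hinvq, ENNReal.mul_rpow_of_nonneg _ _ hinvq]
      ring
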